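/- Let v be a trajectory of the consensus system defined on an interval [t_0, t_1]. Then the velocity diameter is non-increasing: for all t_0 ≤ s ≤ t ≤ t_1, Δ_N(t) ≤ Δ_N(s). -/

import Mathlib

/-- Velocity diameter of the set `S` of agents. -/
noncomputable def sdiam {n d : ℕ} (S : Set (Fin n))
    (v : Fin n → EuclideanSpace ℝ (Fin d)) : ℝ :=
  sSup {x | ∃ i ∈ S, ∃ j ∈ S, x = ‖v i - v j‖}

open Filter Set Topology in
/-- Scalar key lemma: for a system `ḟᵢ = ∑ⱼ aᵢⱼ(t)(fⱼ - fᵢ)` with nonnegative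
coefficients, the max over `i` of `fᵢ` is non-increasing. -/
lemma consensus_sup_antitone {n : ℕ} (hne : (Finset.univ : Finset (Fin n)).Nonempty)
    (a : ℝ → Fin n → Fin n → ℝ) (ha : ∀ t i j, 0 ≤ a t i j)
    (t0 t1 : ℝ) (f : ℝ → Fin n → ℝ)
    (hderiv : ∀ i, ∀ t ∈ Set.Icc t0 t1,
      HasDerivAt (fun u => f u i) (∑ j, a t i j * (f t j - f t i)) t) :
    ∀ s ∈ Set.Icc t0 t1, ∀ t ∈ Set.Icc t0 t1, s ≤ t →
      (Finset.univ.sup' hne fun i => f t i) ≤ Finset.univ.sup' hne fun i => f s i := by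
  intro s hs t ht hst
  set g : ℝ → ℝ := fun u => Finset.univ.sup' hne fun i => f u i with hg_def
  have hIcc : Set.Icc s t ⊆ Set.Icc t0 t1 := Set.Icc_subset_Icc hs.1 ht.2
  have hcont : ∀ i, ContinuousOn (fun u => f u i) (Set.Icc s t) := fun i u hu =>
    ((hderiv i u (hIcc hu)).continuousAt).continuousWithinAt
  have hg : ContinuousOn g (Set.Icc s t) :=
    ContinuousOn.finset_sup'_apply hne fun i _ => hcont i
  have key : ∀ ⦃x⦄, x ∈ Set.Icc s t → g x ≤ (fun _ : ℝ => g s) x := by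
    apply image_le_of_liminf_slope_right_le_deriv_boundary (B := fun _ => g s)
      (B' := fun _ => 0) hg (le_refl (g s)) continuousOn_const
    · intro x _
      exact hasDerivWithinAt_const x _ (g s)
    · -- the liminf slope bound
      intro x hx r hr
      have hxI : x ∈ Set.Icc t0 t1 := hIcc ⟨hx.1, hx.2.le⟩
      -- argmax set
      set A : Finset (Fin n) := Finset.univ.filter (fun j => f x j = g x) with hA_def
      obtain ⟨i0, -, hi0⟩ := Finset.exists_mem_eq_sup' hne (f x)
      have hi0A : i0 ∈ A := by
        simp only [hA_def, Finset.mem_filter, Finset.mem_univ, true_and]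
        exact hi0.symm
      have hA : A.Nonempty := ⟨i0, hi0A⟩
      have hle_g : ∀ j, f x j ≤ g x := fun j => Finset.le_sup' (f x) (Finset.mem_univ j)
      -- E1 : eventually every coordinate is bounded by the sup over A
      have E1 : ∀ j, ∀ᶠ z in 𝓝[>] x, f z j ≤ A.sup' hA fun k => f z k := by
        intro j
        by_cases hjA : j ∈ A
        · exact Filter.Eventually.of_forall fun z => Finset.le_sup' _ hjA
        · have hlt : f x j < g x := by
            refine lt_of_le_of_ne (hle_g j) ?_
            intro h
            exact hjA (by simp [hA_def, h])
          have hpos : 0 < f x i0 - f x j := by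
            have : f x i0 = g x := hi0.symm
            linarith
          have hc : ContinuousAt (fun z => f z i0 - f z j) x :=
        ((hderiv i0 x hxI).continuousAt).sub ((hderiv j x hxI).continuousAt)
          have hev : ∀ᶠ z in 𝓝 x, 0 < f z i0 - f z j :=
            hc.eventually (eventually_gt_nhds hpos)
          refine (hev.filter_mono nhdsWithin_le_nhds).mono fun z hz => ?_
          have : f z j ≤ f z i0 := by linarith
          exact this.trans (Finset.le_sup' _ hi0A)
      have E1' : ∀ᶠ z in 𝓝[>] x, ∀ j, f z j ≤ A.sup' hA fun k => f z k :=
        Filter.eventually_all.2 E1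
      -- E2 : eventually slopes of argmax coordinates are < r
      have E2 : ∀ᶠ z in 𝓝[>] x, ∀ j ∈ A, slope (fun u => f u j) x z < r := by
        rw [Filter.eventually_all_finset]
        intro j hjA
        have hfxj : f x j = g x := (Finset.mem_filter.mp hjA).2
        have hD : (∑ k, a x j k * (f x k - f x j)) ≤ 0 := by
          apply Finset.sum_nonpos
          intro k _
          have h1 : f x k - f x j ≤ 0 := by
            have := hle_g k; rw [hfxj]; linarith [hle_g k]
          exact mul_nonpos_of_nonneg_of_nonpos (ha x j k) h1
        have htend := hasDerivAt_iff_tendsto_slope.mp (hderiv j x hxI)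
        have hev : ∀ᶠ z in 𝓝[≠] x, slope (fun u => f u j) x z < r :=
          htend.eventually (eventually_lt_nhds (lt_of_le_of_lt hD hr))
        exact hev.filter_mono (nhdsWithin_mono x fun z hz => ne_of_gt hz)
      have E3 : ∀ᶠ z in 𝓝[>] x, x < z := eventually_mem_nhdsWithin
      have hxt : x < t := hx.2
      haveI : (𝓝[>] x).NeBot := nhdsGT_neBot x
      apply Filter.Eventually.frequently
      filter_upwards [E1', E2, E3] with z h1 h2 h3
      obtain ⟨j, hjA, hjs⟩ := Finset.exists_mem_eq_sup' hA fun k => f z k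
      have hfxj : f x j = g x := (Finset.mem_filter.mp hjA).2
      have hgz : g z ≤ f z j := by
        rw [← hjs]
        exact Finset.sup'_le hne _ fun k _ => h1 k
      have hzx : 0 < z - x := sub_pos.2 h3
      calc slope g x z = (g z - g x) / (z - x) := slope_def_field g x z
        _ ≤ (f z j - f x j) / (z - x) := by
            have hnum : g z - g x ≤ f z j - f x j := by
              linarith [hgz, hfxj.le, hfxj.ge]
            exact div_le_div_of_nonneg_right hnum hzx.le
        _ = slope (fun u => f u j) x z := (slope_def_field (fun u => f u j) x z).symm
        _ < r := h2 j hjA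
  exact key ⟨hst, le_rfl⟩

open scoped RealInnerProductSpace

/-- For a trajectory of the consensus system
`v̇ᵢ = ∑ⱼ aᵢⱼ(t)(vⱼ - vᵢ)` (with `aᵢⱼ(t) ∈ {0,1}` and `∑ⱼ aᵢⱼ(t) = m`)
defined on `[t₀, t₁]`, the velocity diameter is non-increasing. -/
theorem stmt13 {n d : ℕ} (hn : 0 < n) (m : ℕ) (hm : 1 ≤ m)
    (a : ℝ → Fin n → Fin n → ℝ)
    (ha01 : ∀ t i j, a t i j = 0 ∨ a t i j = 1)
    (harow : ∀ t i, ∑ j, a t i j = (m : ℝ))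
    (t0 t1 : ℝ) (v : ℝ → Fin n → EuclideanSpace ℝ (Fin d))
    (htraj : ∀ i : Fin n, ∀ t ∈ Set.Icc t0 t1,
      HasDerivAt (fun u => v u i) (∑ j, a t i j • (v t j - v t i)) t) :
    ∀ s ∈ Set.Icc t0 t1, ∀ t ∈ Set.Icc t0 t1, s ≤ t →
      sdiam Set.univ (v t) ≤ sdiam Set.univ (v s) := by
  haveI : Nonempty (Fin n) := Fin.pos_iff_nonempty.mp hn
  have hne : (Finset.univ : Finset (Fin n)).Nonempty := Finset.univ_nonempty
  have ha : ∀ t i j, 0 ≤ a t i j := by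
    intro t i j; rcases ha01 t i j with h | h <;> simp [h]
  intro s hs t ht hst
  -- the set of pairwise distances at time s
  set Ds : Set ℝ := {x | ∃ i ∈ (Set.univ : Set (Fin n)), ∃ j ∈ (Set.univ : Set (Fin n)),
    x = ‖v s i - v s j‖} with hDs_def
  have hDs_eq : Ds = Set.range (fun p : Fin n × Fin n => ‖v s p.1 - v s p.2‖) := by
    ext x
    constructor
    · rintro ⟨i, -, j, -, rfl⟩; exact ⟨(i, j), rfl⟩
    · rintro ⟨⟨i, j⟩, rfl⟩; exact ⟨i, trivial, j, trivial, rfl⟩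
  have hbdd : BddAbove Ds := by
    rw [hDs_eq]; exact (Set.finite_range _).bddAbove
  have hmemDs : ∀ i j, ‖v s i - v s j‖ ∈ Ds := fun i j => ⟨i, trivial, j, trivial, rfl⟩
  have hDs_nonneg : (0 : ℝ) ≤ sSup Ds := by
    obtain ⟨i0⟩ := ‹Nonempty (Fin n)›
    have h0 : (0 : ℝ) ∈ Ds := by
      have := hmemDs i0 i0
      simpa using this
    exact le_csSup hbdd h0
  -- key pairwise bound
  have key : ∀ i j : Fin n, ‖v t i - v t j‖ ≤ sSup Ds := by
    intro i j
    -- choose a maximizing direction w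
    set x : EuclideanSpace ℝ (Fin d) := v t i - v t j with hx_def
    by_cases hx0 : x = 0
    · rw [hx0, norm_zero]; exact hDs_nonneg
    set w : EuclideanSpace ℝ (Fin d) := ‖x‖⁻¹ • x with hw_def
    have hxnorm : (0 : ℝ) < ‖x‖ := norm_pos_iff.2 hx0
    have hw1 : ‖w‖ ≤ 1 := by
      rw [hw_def, norm_smul, norm_inv, norm_norm, inv_mul_cancel₀ hxnorm.ne']
    have hwinner : ⟪w, x⟫ = ‖x‖ := by
      rw [hw_def, real_inner_smul_left, real_inner_self_eq_norm_mul_norm]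
      field_simp
    -- the scalar functions
    set f : ℝ → Fin n → ℝ := fun u k => ⟪w, v u k⟫ with hf_def
    have hfderiv : ∀ k, ∀ u ∈ Set.Icc t0 t1,
        HasDerivAt (fun z => f z k) (∑ j', a u k j' * (f u j' - f u k)) u := by
      intro k u hu
      have h := (hasDerivAt_const u w).inner ℝ (htraj k u hu)
      refine h.congr_deriv ?_
      simp only [inner_zero_left, add_zero, inner_sum, real_inner_smul_right,
        inner_sub_right]
      rfl
    have hfnegderiv : ∀ k, ∀ u ∈ Set.Icc t0 t1,
        HasDerivAt (fun z => -f z k) (∑ j', a u k j' * (-f u j' - -f u k)) u := by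
      intro k u hu
      have h := (hfderiv k u hu).fun_neg
      refine h.congr_deriv ?_
      rw [← Finset.sum_neg_distrib]
      congr 1; ext j'; ring
    have hsup := consensus_sup_antitone hne a ha t0 t1 f hfderiv s hs t ht hst
    have hinf := consensus_sup_antitone hne a ha t0 t1 (fun u k => -f u k)
      hfnegderiv s hs t ht hst
    obtain ⟨is, -, his⟩ := Finset.exists_mem_eq_sup' hne (f s)
    obtain ⟨js, -, hjs⟩ := Finset.exists_mem_eq_sup' hne (fun k => -f s k)
    have h1 : f t i ≤ f s is := by
      calc f t i ≤ Finset.univ.sup' hne fun k => f t k :=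
            Finset.le_sup' (f t) (Finset.mem_univ i)
        _ ≤ Finset.univ.sup' hne fun k => f s k := hsup
        _ = f s is := his
    have h2 : -f t j ≤ -f s js := by
      calc -f t j ≤ Finset.univ.sup' hne fun k => -f t k :=
            Finset.le_sup' (fun k => -f t k) (Finset.mem_univ j)
        _ ≤ Finset.univ.sup' hne fun k => -f s k := hinf
        _ = -f s js := hjs
    have hstep : ‖x‖ = f t i - f t j := by
      rw [← hwinner, hx_def, inner_sub_right]
    have hfinal : f s is - f s js ≤ ‖v s is - v s js‖ := by
      have : f s is - f s js = ⟪w, v s is - v s js⟫ := by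
        rw [inner_sub_right]
      rw [this]
      calc ⟪w, v s is - v s js⟫ ≤ ‖w‖ * ‖v s is - v s js‖ := real_inner_le_norm _ _
        _ ≤ 1 * ‖v s is - v s js‖ := by
            apply mul_le_mul_of_nonneg_right hw1 (norm_nonneg _)
        _ = ‖v s is - v s js‖ := one_mul _
    calc ‖v t i - v t j‖ = f t i - f t j := hstep
      _ ≤ f s is - f s js := by linarith
      _ ≤ ‖v s is - v s js‖ := hfinal
      _ ≤ sSup Ds := le_csSup hbdd (hmemDs is js)
  -- conclude
  unfold sdiam
  apply Real.sSup_le _ hDs_nonneg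
  rintro x ⟨i, -, j, -, rfl⟩
  exact key i j
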